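/- Let {X_n} satisfy AIM(x_n) with separation sequence q_n and mixing coefficients α_n, suppose n·F̄(x_n) → τ > 0 as n → ∞ with F̄(x_n) > 0 for every n, and let (p_n) be a sequence of positive integers with p_n = o(n), n·α_n = o(p_n) and q_n = o(p_n). Set γ_n = (1/n) ∑_{j=1}^{n} P(M_{j,j+p_n} ≤ x_n | X_j > x_n). Then the sequence P(M_n ≤ x_n) converges if and only if lim_{n→∞} γ_n exists; and in that case, writing γ = lim_{n→∞} γ_n, one has γ ∈ [0,1] and P(M_n ≤ x_n) → e^{−τγ}. -/

import Mathlib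

open MeasureTheory Filter Finset Asymptotics

/-- Probability of an event as a real number. -/
noncomputable def pr {Ω : Type*} [MeasurableSpace Ω] (P : Measure Ω) (A : Set Ω) : ℝ :=
  (P A).toReal

/-- The event that `X i ≤ x` for every index `i` in the set `S`;
this is the event `{M(S) ≤ x}` where `M(S) = max {X i : i ∈ S}`. -/
def allLe {Ω : Type*} (X : ℕ → Ω → ℝ) (S : Set ℕ) (x : ℝ) : Set Ω :=
  {ω | ∀ i ∈ S, X i ω ≤ x}

/-- `α` is a sequence of AIM mixing coefficients for `X` relative to thresholds `xs`
with separation sequence `q`: for any two intervals `I₁ = [a,b]`, `I₂ = [b+qₙ+1, c]`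
contained in `{1,…,n}`, separated by `qₙ`, each of cardinality at least `qₙ`,
the maximum-based discrepancy is bounded by `α n`. -/
def AIMBound {Ω : Type*} [MeasurableSpace Ω] (P : Measure Ω) (X : ℕ → Ω → ℝ)
    (xs : ℕ → ℝ) (q : ℕ → ℕ) (α : ℕ → ℝ) : Prop :=
  ∀ n a b c : ℕ, 1 ≤ a → a ≤ b → b + q n + 1 ≤ c → c ≤ n →
    q n ≤ b + 1 - a → q n ≤ c - (b + q n) →
    |pr P (allLe X (Set.Icc a b ∪ Set.Icc (b + q n + 1) c) (xs n)) -
      pr P (allLe X (Set.Icc a b) (xs n)) *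
        pr P (allLe X (Set.Icc (b + q n + 1) c) (xs n))| ≤ α n

section Aux
set_option linter.unusedSectionVars false
variable {Ω : Type*} [MeasurableSpace Ω] (P : Measure Ω) [IsProbabilityMeasure P]
variable (X : ℕ → Ω → ℝ)

lemma pr_nonneg (A : Set Ω) : 0 ≤ pr P A := ENNReal.toReal_nonneg

lemma pr_le_one (A : Set Ω) : pr P A ≤ 1 := by
  have h : P A ≤ 1 := prob_le_one
  calc (P A).toReal ≤ (1 : ENNReal).toReal := ENNReal.toReal_mono ENNReal.one_ne_top h
    _ = 1 := by simp

lemma pr_mono {A B : Set Ω} (h : A ⊆ B) : pr P A ≤ pr P B :=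
  ENNReal.toReal_mono (measure_ne_top P B) (measure_mono h)

lemma pr_univ : pr P (Set.univ) = 1 := by simp [pr]

lemma allLe_empty (x : ℝ) : allLe X ∅ x = Set.univ := by ext ω; simp [allLe]

lemma allLe_anti {S T : Set ℕ} (h : S ⊆ T) (x : ℝ) : allLe X T x ⊆ allLe X S x :=
  fun ω hω i hi => hω i (h hi)

lemma measurable_allLe (hmeas : ∀ i, Measurable (X i)) (S : Set ℕ) (x : ℝ) :
    MeasurableSet (allLe X S x) := by
  have h : allLe X S x = ⋂ i ∈ S, {ω | X i ω ≤ x} := by ext ω; simp [allLe]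
  rw [h]
  exact MeasurableSet.biInter (Set.to_countable S)
    (fun i _ => measurableSet_le (hmeas i) measurable_const)

lemma pr_diff {A B : Set Ω} (h : A ⊆ B) (hA : MeasurableSet A) :
    pr P (B \ A) = pr P B - pr P A := by
  have h1 : P B = P (B \ A) + P A := by
    rw [← measure_union disjoint_sdiff_self_left hA, Set.diff_union_of_subset h]
  show (P (B \ A)).toReal = (P B).toReal - (P A).toReal
  rw [h1, ENNReal.toReal_add (measure_ne_top _ _) (measure_ne_top _ _)]
  ring

lemma pr_biUnion_le (T : Finset ℕ) (f : ℕ → Set Ω) :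
    pr P (⋃ i ∈ T, f i) ≤ ∑ i ∈ T, pr P (f i) := by
  calc (P (⋃ i ∈ T, f i)).toReal ≤ (∑ i ∈ T, P (f i)).toReal :=
        ENNReal.toReal_mono (ENNReal.sum_ne_top.2 fun i _ => measure_ne_top _ _)
          (measure_biUnion_finset_le T f)
    _ = ∑ i ∈ T, (P (f i)).toReal := ENNReal.toReal_sum (fun i _ => measure_ne_top _ _)

lemma pr_compl {A : Set Ω} (hA : MeasurableSet A) : pr P Aᶜ = 1 - pr P A := by
  have h : Aᶜ = Set.univ \ A := (Set.compl_eq_univ_diff A)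
  rw [h, pr_diff P (Set.subset_univ A) hA, pr_univ]

lemma pr_gt (hmeas : ∀ i, Measurable (X i)) (u : ℝ) (i : ℕ) :
    pr P {ω | u < X i ω} = 1 - pr P {ω | X i ω ≤ u} := by
  have h : {ω | u < X i ω} = {ω | X i ω ≤ u}ᶜ := by ext ω; simp
  rw [h, pr_compl P (measurableSet_le (hmeas i) measurable_const)]

/-- dropping extra indices costs at most card * w -/
lemma pr_drop (hmeas : ∀ i, Measurable (X i)) {u w : ℝ}
    (hw : ∀ i, 1 ≤ i → pr P {ω | u < X i ω} = w)
    (S : Set ℕ) (T : Finset ℕ) (hT : ∀ i ∈ T, 1 ≤ i) :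
    pr P (allLe X S u) - pr P (allLe X (S ∪ ↑T) u) ≤ T.card * w := by
  have hsub : allLe X (S ∪ ↑T) u ⊆ allLe X S u := allLe_anti X Set.subset_union_left u
  have hdiff : allLe X S u \ allLe X (S ∪ ↑T) u ⊆ ⋃ i ∈ T, {ω | u < X i ω} := by
    intro ω hω
    simp only [Set.mem_diff, allLe, Set.mem_setOf_eq] at hω
    obtain ⟨h1, h2⟩ := hω
    by_contra hc
    simp only [Set.mem_iUnion, Set.mem_setOf_eq, not_exists, not_lt] at hc
    exact h2 (fun i hi => by
      rcases (Set.mem_union i S ↑T).1 hi with h | h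
      · exact h1 i h
      · exact hc i h)
  calc pr P (allLe X S u) - pr P (allLe X (S ∪ ↑T) u)
      = pr P (allLe X S u \ allLe X (S ∪ ↑T) u) :=
        (pr_diff P hsub (measurable_allLe X hmeas _ u)).symm
    _ ≤ pr P (⋃ i ∈ T, {ω | u < X i ω}) := pr_mono P hdiff
    _ ≤ ∑ i ∈ T, pr P {ω | u < X i ω} := pr_biUnion_le P T _
    _ = ∑ i ∈ T, w := Finset.sum_congr rfl (fun i hi => hw i (hT i hi))
    _ = T.card * w := by rw [Finset.sum_const, nsmul_eq_mul]

lemma pr_drop_nonneg {u : ℝ} (S : Set ℕ) (T : Set ℕ) :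
    pr P (allLe X (S ∪ T) u) ≤ pr P (allLe X S u) :=
  pr_mono P (allLe_anti X Set.subset_union_left u)

/-- single-step last-exceedance identity -/
lemma pr_single (hmeas : ∀ i, Measurable (X i)) (u : ℝ) {a e : ℕ} (hae : a ≤ e) :
    pr P ({ω | u < X a ω} ∩ allLe X (Set.Icc (a+1) e) u)
      = pr P (allLe X (Set.Icc (a+1) e) u) - pr P (allLe X (Set.Icc a e) u) := by
  have hsub : allLe X (Set.Icc a e) u ⊆ allLe X (Set.Icc (a+1) e) u :=
    allLe_anti X (Set.Icc_subset_Icc_left (Nat.le_succ a)) u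
  have hset : allLe X (Set.Icc (a+1) e) u \ allLe X (Set.Icc a e) u
      = {ω | u < X a ω} ∩ allLe X (Set.Icc (a+1) e) u := by
    ext ω
    simp only [Set.mem_diff, Set.mem_inter_iff, Set.mem_setOf_eq, allLe, Set.mem_Icc]
    constructor
    · rintro ⟨h1, h2⟩
      refine ⟨?_, h1⟩
      by_contra hc
      push_neg at hc
      exact h2 (fun i hi => by
        rcases Nat.eq_or_lt_of_le hi.1 with h | h
        · exact h ▸ hc
        · exact h1 i ⟨h, hi.2⟩)
    · rintro ⟨h1, h2⟩
      refine ⟨h2, fun hall => ?_⟩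
      exact absurd (hall a ⟨le_refl a, hae⟩) (not_le.2 h1)
  rw [← hset, pr_diff P hsub (measurable_allLe X hmeas _ u)]

/-- last-exceedance decomposition over an interval -/
lemma pr_decomp (hmeas : ∀ i, Measurable (X i)) (u : ℝ) (e : ℕ) :
    ∀ d a b : ℕ, a + d = b + 1 → b ≤ e →
    ∑ j ∈ Finset.Icc a b, pr P ({ω | u < X j ω} ∩ allLe X (Set.Icc (j+1) e) u)
      = pr P (allLe X (Set.Icc (b+1) e) u) - pr P (allLe X (Set.Icc a e) u) := by
  intro d
  induction d with
  | zero =>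
    intro a b hab hbe
    have : a = b + 1 := by omega
    subst this
    rw [Finset.Icc_eq_empty (by omega), Finset.sum_empty]
    ring
  | succ d ih =>
    intro a b hab hbe
    have hale : a ≤ b := by omega
    have hins : Finset.Icc a b = insert a (Finset.Icc (a+1) b) := by
      ext x; simp [Finset.mem_Icc, Finset.mem_insert]; omega
    rw [hins, Finset.sum_insert (by simp), ih (a+1) b (by omega) hbe,
      pr_single P X hmeas u (le_trans hale hbe)]
    ring

end Aux

lemma abs_prod_sub_prod_le {ι : Type*} (s : Finset ι) (a b : ι → ℝ)
    (ha : ∀ i ∈ s, 0 ≤ a i ∧ a i ≤ 1) (hb : ∀ i ∈ s, 0 ≤ b i ∧ b i ≤ 1) :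
    |∏ i ∈ s, a i - ∏ i ∈ s, b i| ≤ ∑ i ∈ s, |a i - b i| := by
  classical
  induction s using Finset.induction_on with
  | empty => simp
  | @insert x s' hx ih =>
    rw [Finset.prod_insert hx, Finset.prod_insert hx, Finset.sum_insert hx]
    have hax := ha x (Finset.mem_insert_self x s')
    have hbx := hb x (Finset.mem_insert_self x s')
    have ha' : ∀ i ∈ s', 0 ≤ a i ∧ a i ≤ 1 := fun i hi => ha i (Finset.mem_insert_of_mem hi)
    have hb' : ∀ i ∈ s', 0 ≤ b i ∧ b i ≤ 1 := fun i hi => hb i (Finset.mem_insert_of_mem hi)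
    have ihx := ih ha' hb'
    have hpa : 0 ≤ ∏ i ∈ s', a i := Finset.prod_nonneg (fun i hi => (ha' i hi).1)
    have hpa1 : ∏ i ∈ s', a i ≤ 1 := Finset.prod_le_one (fun i hi => (ha' i hi).1) (fun i hi => (ha' i hi).2)
    have hpb : 0 ≤ ∏ i ∈ s', b i := Finset.prod_nonneg (fun i hi => (hb' i hi).1)
    have hpb1 : ∏ i ∈ s', b i ≤ 1 := Finset.prod_le_one (fun i hi => (hb' i hi).1) (fun i hi => (hb' i hi).2)
    have key : |a x * ∏ i ∈ s', a i - b x * ∏ i ∈ s', b i| ≤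
        |a x - b x| * ∏ i ∈ s', a i + b x * |∏ i ∈ s', a i - ∏ i ∈ s', b i| := by
      have : a x * ∏ i ∈ s', a i - b x * ∏ i ∈ s', b i
          = (a x - b x) * ∏ i ∈ s', a i + b x * (∏ i ∈ s', a i - ∏ i ∈ s', b i) := by ring
      rw [this]
      calc _ ≤ |(a x - b x) * ∏ i ∈ s', a i| + |b x * (∏ i ∈ s', a i - ∏ i ∈ s', b i)| :=
            abs_add_le _ _
        _ = |a x - b x| * |∏ i ∈ s', a i| + |b x| * |∏ i ∈ s', a i - ∏ i ∈ s', b i| := by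
            rw [abs_mul, abs_mul]
        _ = |a x - b x| * ∏ i ∈ s', a i + b x * |∏ i ∈ s', a i - ∏ i ∈ s', b i| := by
            rw [abs_of_nonneg hpa, abs_of_nonneg hbx.1]
    calc |a x * ∏ i ∈ s', a i - b x * ∏ i ∈ s', b i|
        ≤ |a x - b x| * ∏ i ∈ s', a i + b x * |∏ i ∈ s', a i - ∏ i ∈ s', b i| := key
      _ ≤ |a x - b x| * 1 + 1 * ∑ i ∈ s', |a i - b i| :=
          add_le_add (mul_le_mul_of_nonneg_left hpa1 (abs_nonneg _))
            (mul_le_mul hbx.2 ihx (abs_nonneg _) one_pos.le)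
      _ = |a x - b x| + ∑ i ∈ s', |a i - b i| := by ring

lemma prod_one_sub_exp {ι : Type*} (s : Finset ι) (t : ι → ℝ) (ε : ℝ) (hε : ε ≤ 1)
    (ht : ∀ i ∈ s, 0 ≤ t i ∧ t i ≤ ε) :
    |∏ i ∈ s, (1 - t i) - Real.exp (-∑ i ∈ s, t i)| ≤ ε * ∑ i ∈ s, t i := by
  rcases s.eq_empty_or_nonempty with rfl | ⟨i0, hi0⟩
  · simp
  have hε0 : 0 ≤ ε := le_trans (ht i0 hi0).1 (ht i0 hi0).2
  have hexp : Real.exp (-∑ i ∈ s, t i) = ∏ i ∈ s, Real.exp (-t i) := by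
    rw [← Real.exp_sum]; congr 1; rw [← Finset.sum_neg_distrib]
  rw [hexp]
  have h1 : ∀ i ∈ s, 0 ≤ 1 - t i ∧ 1 - t i ≤ 1 := by
    intro i hi; constructor
    · linarith [(ht i hi).2, hε]
    · linarith [(ht i hi).1]
  have h2 : ∀ i ∈ s, 0 ≤ Real.exp (-t i) ∧ Real.exp (-t i) ≤ 1 := by
    intro i hi
    exact ⟨(Real.exp_pos _).le, Real.exp_le_one_iff.2 (by linarith [(ht i hi).1])⟩
  calc |∏ i ∈ s, (1 - t i) - ∏ i ∈ s, Real.exp (-t i)|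
      ≤ ∑ i ∈ s, |(1 - t i) - Real.exp (-t i)| := abs_prod_sub_prod_le s _ _ h1 h2
    _ ≤ ∑ i ∈ s, ε * t i := by
        apply Finset.sum_le_sum
        intro i hi
        have ht1 : |(-t i)| ≤ 1 := by rw [abs_neg, abs_of_nonneg (ht i hi).1]; linarith [(ht i hi).2]
        have := Real.abs_exp_sub_one_sub_id_le ht1
        have heq : |(1 - t i) - Real.exp (-t i)| = |Real.exp (-t i) - 1 - (-t i)| := by
          rw [abs_sub_comm]; ring_nf
        rw [heq]
        calc |Real.exp (-t i) - 1 - (-t i)| ≤ (-t i)^2 := this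
          _ = t i * t i := by ring
          _ ≤ ε * t i := mul_le_mul_of_nonneg_right (ht i hi).2 (ht i hi).1
    _ = ε * ∑ i ∈ s, t i := by rw [Finset.mul_sum]

lemma exp_lip {a b : ℝ} (ha : a ≤ 0) (hb : b ≤ 0) :
    |Real.exp a - Real.exp b| ≤ |a - b| := by
  wlog h : b ≤ a generalizing a b
  · rw [abs_sub_comm, abs_sub_comm a b]; exact this hb ha (by linarith)
  have e : Real.exp a * Real.exp (b - a) = Real.exp b := by rw [← Real.exp_add]; ring_nf
  have h1 : Real.exp a * (1 + (b - a)) ≤ Real.exp b := by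
    nlinarith [Real.exp_pos a, Real.add_one_le_exp (b - a)]
  have h2 : Real.exp a ≤ 1 := Real.exp_le_one_iff.2 ha
  have h3 : Real.exp a - Real.exp b ≤ a - b := by nlinarith [Real.exp_pos a]
  rw [abs_of_nonneg (by linarith [Real.exp_le_exp.2 h] : (0:ℝ) ≤ Real.exp a - Real.exp b),
    abs_of_nonneg (by linarith : (0:ℝ) ≤ a - b)]
  exact h3
section Peel
set_option linter.unusedSectionVars false
variable {Ω : Type*} [MeasurableSpace Ω] (P : Measure Ω) [IsProbabilityMeasure P]
variable (X : ℕ → Ω → ℝ)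

lemma peel_step (hmeas : ∀ i, Measurable (X i)) {u w : ℝ}
    (hw : ∀ i, 1 ≤ i → pr P {ω | u < X i ω} = w)
    (hw0 : 0 ≤ w) {q p n K : ℕ} {αn : ℝ} (hq1 : 1 ≤ q) (hqp : 3 * q ≤ p)
    (hpK : p ≤ K) (hKn : K + p ≤ n)
    (hmix : ∀ a b c : ℕ, 1 ≤ a → a ≤ b → b + q + 1 ≤ c → c ≤ n →
      q ≤ b + 1 - a → q ≤ c - (b + q) →
      |pr P (allLe X (Set.Icc a b ∪ Set.Icc (b + q + 1) c) u) -
        pr P (allLe X (Set.Icc a b) u) * pr P (allLe X (Set.Icc (b + q + 1) c) u)| ≤ αn) :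
    |pr P (allLe X (Set.Icc 1 (K + p)) u) -
      pr P (allLe X (Set.Icc 1 K) u) * pr P (allLe X (Set.Icc (K + q + 1) (K + p)) u)| ≤
      αn + q * w := by
  have hmix' := hmix 1 K (K + p) le_rfl (by omega) (by omega) hKn (by omega) (by omega)
  have hunion : (Set.Icc 1 K ∪ Set.Icc (K + q + 1) (K + p)) ∪ ↑(Finset.Icc (K + 1) (K + q))
      = Set.Icc 1 (K + p) := by
    ext i
    simp only [Set.mem_union, Set.mem_Icc, Finset.coe_Icc]
    omega
  have hdrop := pr_drop P X hmeas hw (Set.Icc 1 K ∪ Set.Icc (K + q + 1) (K + p))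
    (Finset.Icc (K + 1) (K + q)) (fun i hi => by simp only [Finset.mem_Icc] at hi; omega)
  rw [hunion] at hdrop
  have hcard : (Finset.Icc (K + 1) (K + q)).card = q := by rw [Nat.card_Icc]; omega
  rw [hcard] at hdrop
  have hmono : pr P (allLe X (Set.Icc 1 (K + p)) u) ≤
      pr P (allLe X (Set.Icc 1 K ∪ Set.Icc (K + q + 1) (K + p)) u) := by
    apply pr_mono
    apply allLe_anti
    intro i hi
    rcases hi with h | h <;> (simp only [Set.mem_Icc] at *; omega)
  calc |pr P (allLe X (Set.Icc 1 (K + p)) u) -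
      pr P (allLe X (Set.Icc 1 K) u) * pr P (allLe X (Set.Icc (K + q + 1) (K + p)) u)|
      ≤ |pr P (allLe X (Set.Icc 1 (K + p)) u) -
          pr P (allLe X (Set.Icc 1 K ∪ Set.Icc (K + q + 1) (K + p)) u)| +
        |pr P (allLe X (Set.Icc 1 K ∪ Set.Icc (K + q + 1) (K + p)) u) -
          pr P (allLe X (Set.Icc 1 K) u) * pr P (allLe X (Set.Icc (K + q + 1) (K + p)) u)| := by
        exact abs_sub_le _ _ _
    _ ≤ q * w + αn := by
        refine add_le_add ?_ hmix'
        rw [abs_le]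
        constructor <;> linarith
    _ = αn + q * w := by ring

lemma peel (hmeas : ∀ i, Measurable (X i)) {u w : ℝ}
    (hw : ∀ i, 1 ≤ i → pr P {ω | u < X i ω} = w)
    (hw0 : 0 ≤ w) {q p n : ℕ} {αn : ℝ} (hq1 : 1 ≤ q) (hqp : 3 * q ≤ p) (hα0 : 0 ≤ αn)
    (hmix : ∀ a b c : ℕ, 1 ≤ a → a ≤ b → b + q + 1 ≤ c → c ≤ n →
      q ≤ b + 1 - a → q ≤ c - (b + q) →
      |pr P (allLe X (Set.Icc a b ∪ Set.Icc (b + q + 1) c) u) -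
        pr P (allLe X (Set.Icc a b) u) * pr P (allLe X (Set.Icc (b + q + 1) c) u)| ≤ αn) :
    ∀ k : ℕ, k * p ≤ n →
    |pr P (allLe X (Set.Icc 1 (k * p)) u) -
      ∏ m ∈ Finset.range k, pr P (allLe X (Set.Icc (m * p + q + 1) ((m + 1) * p)) u)| ≤
      k * (αn + q * w) := by
  intro k
  induction k with
  | zero =>
    intro _
    have h0 : Set.Icc 1 (0 * p) = (∅ : Set ℕ) := by
      rw [Set.Icc_eq_empty]; omega
    simp [h0, allLe_empty, pr_univ]
  | succ k ih =>
    intro hkn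
    have hsm : (k + 1) * p = k * p + p := by ring
    have hkn' : k * p ≤ n := by omega
    have ihk := ih hkn'
    have hqw0 : (0:ℝ) ≤ (q:ℝ) * w := mul_nonneg (Nat.cast_nonneg q) hw0
    rw [Finset.prod_range_succ, hsm]
    rcases Nat.eq_zero_or_pos k with rfl | hk1
    · -- base block: no mixing needed
      simp only [Nat.zero_mul, Nat.zero_add, zero_mul, zero_add, Finset.range_zero,
        Finset.prod_empty, one_mul, Nat.cast_one]
      have hunion : Set.Icc (q + 1) p ∪ ↑(Finset.Icc 1 q) = Set.Icc 1 p := by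
        ext i
        simp only [Set.mem_union, Set.mem_Icc, Finset.coe_Icc]
        omega
      have hdrop := pr_drop P X hmeas hw (Set.Icc (q + 1) p) (Finset.Icc 1 q)
        (fun i hi => (Finset.mem_Icc.1 hi).1)
      rw [hunion] at hdrop
      have hcard : (Finset.Icc 1 q).card = q := by rw [Nat.card_Icc]; omega
      rw [hcard] at hdrop
      have hmono : pr P (allLe X (Set.Icc 1 p) u) ≤ pr P (allLe X (Set.Icc (q + 1) p) u) := by
        apply pr_mono
        apply allLe_anti
        intro i hi
        simp only [Set.mem_Icc] at *
        omega
      rw [abs_le]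
      constructor <;> [linarith; linarith]
    · have hpK : p ≤ k * p := Nat.le_mul_of_pos_left p hk1
      have hstep := peel_step P X hmeas hw hw0 hq1 hqp hpK (by omega) hmix
      have hJv1 : pr P (allLe X (Set.Icc (k * p + q + 1) (k * p + p)) u) ≤ 1 := pr_le_one P _
      have hJv0 : 0 ≤ pr P (allLe X (Set.Icc (k * p + q + 1) (k * p + p)) u) := pr_nonneg P _
      have hPk0 : 0 ≤ ∏ m ∈ Finset.range k, pr P (allLe X (Set.Icc (m * p + q + 1) ((m + 1) * p)) u) :=
        Finset.prod_nonneg (fun i _ => pr_nonneg P _)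
      set A := pr P (allLe X (Set.Icc 1 (k * p + p)) u)
      set B := pr P (allLe X (Set.Icc 1 (k * p)) u)
      set Jv := pr P (allLe X (Set.Icc (k * p + q + 1) (k * p + p)) u)
      set Pk := ∏ m ∈ Finset.range k, pr P (allLe X (Set.Icc (m * p + q + 1) ((m + 1) * p)) u)
      have habs3 : |B * Jv - Pk * Jv| ≤ (k : ℝ) * (αn + q * w) := by
        rw [← sub_mul, abs_mul, abs_of_nonneg hJv0]
        calc |B - Pk| * Jv ≤ ((k : ℝ) * (αn + q * w)) * 1 :=
              mul_le_mul ihk hJv1 hJv0 (by positivity)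
          _ = (k : ℝ) * (αn + q * w) := by ring
      calc |A - Pk * Jv| ≤ |A - B * Jv| + |B * Jv - Pk * Jv| := abs_sub_le _ _ _
        _ ≤ (αn + q * w) + (k : ℝ) * (αn + q * w) := add_le_add hstep habs3
        _ = ((k : ℕ) + 1 : ℝ) * (αn + q * w) := by ring
        _ = ((k + 1 : ℕ) : ℝ) * (αn + q * w) := by push_cast; ring
end Peel
section Mid
set_option linter.unusedSectionVars false
variable {Ω : Type*} [MeasurableSpace Ω] (P : Measure Ω) [IsProbabilityMeasure P]
variable (X : ℕ → Ω → ℝ)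

lemma Icc_eq_Ioc (K N : ℕ) : Finset.Icc (K + 1) N = Finset.Ioc K N := by
  ext x; simp only [Finset.mem_Icc, Finset.mem_Ioc]; omega

lemma Icc_one_eq_Ioc (N : ℕ) : Finset.Icc 1 N = Finset.Ioc 0 N := by
  ext x; simp only [Finset.mem_Icc, Finset.mem_Ioc]; omega

lemma sum_blocks (g : ℕ → ℝ) (p : ℕ) :
    ∀ k, ∑ j ∈ Finset.Icc 1 (k * p), g j
      = ∑ m ∈ Finset.range k, ∑ j ∈ Finset.Icc (m * p + 1) ((m + 1) * p), g j := by
  intro k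
  induction k with
  | zero => simp
  | succ k ih =>
    rw [Finset.sum_range_succ, ← ih, Icc_one_eq_Ioc, Icc_one_eq_Ioc, Icc_eq_Ioc]
    exact (Finset.sum_Ioc_consecutive g (Nat.zero_le _) (by nlinarith)).symm

lemma sum_tail (g : ℕ → ℝ) {a n : ℕ} (h : a ≤ n) :
    ∑ j ∈ Finset.Icc 1 n, g j
      = ∑ j ∈ Finset.Icc 1 a, g j + ∑ j ∈ Finset.Icc (a + 1) n, g j := by
  rw [Icc_one_eq_Ioc, Icc_one_eq_Ioc, Icc_eq_Ioc]
  exact (Finset.sum_Ioc_consecutive g (Nat.zero_le _) h).symm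

lemma one_sub_pr_le (hmeas : ∀ i, Measurable (X i)) {u w : ℝ}
    (hw : ∀ i, 1 ≤ i → pr P {ω | u < X i ω} = w) {a b : ℕ} (ha : 1 ≤ a) :
    1 - pr P (allLe X (Set.Icc a b) u) ≤ ((b + 1 - a : ℕ) : ℝ) * w := by
  have hdrop := pr_drop P X hmeas hw ∅ (Finset.Icc a b)
    (fun i hi => by simp only [Finset.mem_Icc] at hi; omega)
  have hu : (∅ : Set ℕ) ∪ ↑(Finset.Icc a b) = Set.Icc a b := by
    rw [Set.empty_union, Finset.coe_Icc]
  rw [hu, allLe_empty, pr_univ, Nat.card_Icc] at hdrop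
  exact hdrop

lemma S1_eq (hmeas : ∀ i, Measurable (X i)) (u : ℝ) (K p : ℕ) (hp : 1 ≤ p) :
    ∑ j ∈ Finset.Icc (K + 1) (K + p),
        pr P ({ω | u < X j ω} ∩ allLe X (Set.Icc (j + 1) (K + p)) u)
      = 1 - pr P (allLe X (Set.Icc (K + 1) (K + p)) u) := by
  have h := pr_decomp P X hmeas u (K + p) p (K + 1) (K + p) (by omega) (by omega)
  rw [h]
  have he : Set.Icc (K + p + 1) (K + p) = (∅ : Set ℕ) := Set.Icc_eq_empty (by omega)
  rw [he, allLe_empty, pr_univ]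

lemma S2_eq (hmeas : ∀ i, Measurable (X i)) (u : ℝ) (K p : ℕ) (hp : 1 ≤ p) :
    ∑ j ∈ Finset.Icc (K + 1) (K + p),
        pr P ({ω | u < X j ω} ∩ allLe X (Set.Icc (j + 1) (K + 2 * p)) u)
      = pr P (allLe X (Set.Icc (K + p + 1) (K + 2 * p)) u)
        - pr P (allLe X (Set.Icc (K + 1) (K + 2 * p)) u) :=
  pr_decomp P X hmeas u (K + 2 * p) p (K + 1) (K + p) (by omega) (by omega)

lemma block_cross (hmeas : ∀ i, Measurable (X i)) {u w : ℝ}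
    (hw : ∀ i, 1 ≤ i → pr P {ω | u < X i ω} = w) (hw0 : 0 ≤ w)
    {q p n K : ℕ} {αn : ℝ} (hq1 : 1 ≤ q) (hqp : 3 * q ≤ p) (hα0 : 0 ≤ αn)
    (hKn : K + 2 * p ≤ n)
    (hmix : ∀ a b c : ℕ, 1 ≤ a → a ≤ b → b + q + 1 ≤ c → c ≤ n →
      q ≤ b + 1 - a → q ≤ c - (b + q) →
      |pr P (allLe X (Set.Icc a b ∪ Set.Icc (b + q + 1) c) u) -
        pr P (allLe X (Set.Icc a b) u) * pr P (allLe X (Set.Icc (b + q + 1) c) u)| ≤ αn) :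
    (1 - pr P (allLe X (Set.Icc (K + 1) (K + p)) u))
      - (pr P (allLe X (Set.Icc (K + p + 1) (K + 2 * p)) u)
          - pr P (allLe X (Set.Icc (K + 1) (K + 2 * p)) u))
      ≤ ((p : ℝ) * w) ^ 2 + q * w + αn := by
  have hmix' := hmix (K + 1) (K + p) (K + 2 * p) (by omega) (by omega) (by omega) hKn
    (by omega) (by omega)
  set Ipr := pr P (allLe X (Set.Icc (K + 1) (K + p)) u) with hIpr
  set I' := pr P (allLe X (Set.Icc (K + p + 1) (K + 2 * p)) u) with hI'
  set J' := pr P (allLe X (Set.Icc (K + p + q + 1) (K + 2 * p)) u) with hJ'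
  set W := pr P (allLe X (Set.Icc (K + 1) (K + 2 * p)) u) with hW
  set U := pr P (allLe X (Set.Icc (K + 1) (K + p) ∪ Set.Icc (K + p + q + 1) (K + 2 * p)) u) with hU
  have hWU : W ≤ U := by
    apply pr_mono
    apply allLe_anti
    intro i hi
    rcases hi with h | h <;> (simp only [Set.mem_Icc] at *; omega)
  have hJI : J' - I' ≤ (q : ℝ) * w := by
    have hdrop := pr_drop P X hmeas hw (Set.Icc (K + p + q + 1) (K + 2 * p))
      (Finset.Icc (K + p + 1) (K + p + q)) (fun i hi => by simp only [Finset.mem_Icc] at hi; omega)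
    have hu : Set.Icc (K + p + q + 1) (K + 2 * p) ∪ ↑(Finset.Icc (K + p + 1) (K + p + q))
        = Set.Icc (K + p + 1) (K + 2 * p) := by
      ext i; simp only [Set.mem_union, Set.mem_Icc, Finset.coe_Icc]; omega
    rw [hu, Nat.card_Icc] at hdrop
    have : K + p + q + 1 - (K + p + 1) = q := by omega
    rw [this] at hdrop
    exact hdrop
  have hIm : 1 - Ipr ≤ (p : ℝ) * w := by
    have h := one_sub_pr_le P X hmeas hw (a := K + 1) (b := K + p) (by omega)
    have hc : (K + p + 1 - (K + 1) : ℕ) = p := by omega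
    rw [hc] at h
    exact h
  have hI1 : 1 - I' ≤ (p : ℝ) * w := by
    have h := one_sub_pr_le P X hmeas hw (a := K + p + 1) (b := K + 2 * p) (by omega)
    have hc : (K + 2 * p + 1 - (K + p + 1) : ℕ) = p := by omega
    rw [hc] at h
    exact h
  have hI0 : 0 ≤ Ipr := pr_nonneg P _
  have hI'0 : 0 ≤ I' := pr_nonneg P _
  have hI1' : Ipr ≤ 1 := pr_le_one P _
  have hI'1 : I' ≤ 1 := pr_le_one P _
  have hJ'0 : 0 ≤ J' := pr_nonneg P _
  have habs : U ≤ Ipr * J' + αn := by linarith [(abs_le.1 hmix').2]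
  have hqw0 : (0:ℝ) ≤ (q:ℝ) * w := mul_nonneg (Nat.cast_nonneg q) hw0
  nlinarith [mul_nonneg (mul_nonneg (Nat.cast_nonneg p) hw0) (mul_nonneg (Nat.cast_nonneg p) hw0)]
end Mid
section Main
set_option linter.unusedSectionVars false
set_option maxHeartbeats 1600000
variable {Ω : Type*} [MeasurableSpace Ω] (P : Measure Ω) [IsProbabilityMeasure P]
variable (X : ℕ → Ω → ℝ)

lemma main_est (hmeas : ∀ i, Measurable (X i)) {u w : ℝ}
    (hw : ∀ i, 1 ≤ i → pr P {ω | u < X i ω} = w) (hw0 : 0 ≤ w)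
    {q p n : ℕ} {αn : ℝ} (hq1 : 1 ≤ q) (hqp : 3 * q ≤ p) (hα0 : 0 ≤ αn) (hpn : p ≤ n)
    (hpw1 : (p : ℝ) * w ≤ 1)
    (hmix : ∀ a b c : ℕ, 1 ≤ a → a ≤ b → b + q + 1 ≤ c → c ≤ n →
      q ≤ b + 1 - a → q ≤ c - (b + q) →
      |pr P (allLe X (Set.Icc a b ∪ Set.Icc (b + q + 1) c) u) -
        pr P (allLe X (Set.Icc a b) u) * pr P (allLe X (Set.Icc (b + q + 1) c) u)| ≤ αn) :
    |pr P (allLe X (Set.Icc 1 n) u) -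
      Real.exp (-(∑ j ∈ Finset.Icc 1 n,
        pr P ({ω | u < X j ω} ∩ allLe X (Set.Icc (j + 1) (j + p)) u)))|
    ≤ ((n / p : ℕ) : ℝ) * (2 * αn) + 3 * ((n / p : ℕ) : ℝ) * q * w + 3 * p * w
      + ((p : ℝ) * w) * ((n : ℝ) * w) + ((n / p : ℕ) : ℝ) * ((p : ℝ) * w) ^ 2 := by
  have hp1 : 1 ≤ p := by omega
  set k := n / p with hk
  have hk1 : 1 ≤ k := (Nat.one_le_div_iff (by omega)).2 hpn
  have hkp_le : k * p ≤ n := by rw [hk]; exact Nat.div_mul_le_self n p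
  have hnlt : n < k * p + p := by
    have h1 : n % p + k * p = n := by rw [hk]; exact Nat.mod_add_div' n p
    have h2 : n % p < p := Nat.mod_lt _ (by omega)
    omega
  have hqw0 : (0:ℝ) ≤ (q:ℝ) * w := mul_nonneg (Nat.cast_nonneg q) hw0
  have hpw0 : (0:ℝ) ≤ (p:ℝ) * w := mul_nonneg (Nat.cast_nonneg p) hw0
  have hg0 : ∀ j : ℕ, 0 ≤ pr P ({ω | u < X j ω} ∩ allLe X (Set.Icc (j + 1) (j + p)) u) :=
    fun j => pr_nonneg P _
  have hgw : ∀ j : ℕ, 1 ≤ j →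
      pr P ({ω | u < X j ω} ∩ allLe X (Set.Icc (j + 1) (j + p)) u) ≤ w := by
    intro j hj
    rw [← hw j hj]
    exact pr_mono P Set.inter_subset_left
  -- Step A : |A - D| ≤ p * w
  have hAD : |pr P (allLe X (Set.Icc 1 n) u) - pr P (allLe X (Set.Icc 1 (k * p)) u)|
      ≤ (p:ℝ) * w := by
    have hmono : pr P (allLe X (Set.Icc 1 n) u) ≤ pr P (allLe X (Set.Icc 1 (k * p)) u) :=
      pr_mono P (allLe_anti X (Set.Icc_subset_Icc_right hkp_le) u)
    have hdrop := pr_drop P X hmeas hw (Set.Icc 1 (k * p)) (Finset.Icc (k * p + 1) n)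
      (fun i hi => by simp only [Finset.mem_Icc] at hi; omega)
    have hu : Set.Icc 1 (k * p) ∪ ↑(Finset.Icc (k * p + 1) n) = Set.Icc 1 n := by
      ext i; simp only [Set.mem_union, Set.mem_Icc, Finset.coe_Icc]; omega
    rw [hu, Nat.card_Icc] at hdrop
    have hcard : ((n + 1 - (k * p + 1) : ℕ) : ℝ) * w ≤ (p : ℝ) * w :=
      mul_le_mul_of_nonneg_right (Nat.cast_le.2 (by omega)) hw0
    rw [abs_sub_comm, abs_of_nonneg (by linarith)]
    linarith
  -- Step B : peel
  have hDP : |pr P (allLe X (Set.Icc 1 (k * p)) u) -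
      ∏ m ∈ Finset.range k, pr P (allLe X (Set.Icc (m * p + q + 1) ((m + 1) * p)) u)|
      ≤ (k : ℝ) * (αn + q * w) := peel P X hmeas hw hw0 hq1 hqp hα0 hmix k hkp_le
  -- Step C : product to exponential
  have hJm : ∀ m ∈ Finset.range k,
      0 ≤ 1 - pr P (allLe X (Set.Icc (m * p + q + 1) ((m + 1) * p)) u) ∧
      1 - pr P (allLe X (Set.Icc (m * p + q + 1) ((m + 1) * p)) u) ≤ (p:ℝ) * w := by
    intro m _
    refine ⟨by linarith [pr_le_one P (allLe X (Set.Icc (m * p + q + 1) ((m + 1) * p)) u)], ?_⟩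
    have h := one_sub_pr_le P X hmeas hw (a := m * p + q + 1) (b := (m + 1) * p) (by omega)
    have hc : ((m + 1) * p + 1 - (m * p + q + 1) : ℕ) ≤ p := by
      have hmp : (m + 1) * p = m * p + p := by ring
      omega
    calc 1 - pr P (allLe X (Set.Icc (m * p + q + 1) ((m + 1) * p)) u)
        ≤ (((m + 1) * p + 1 - (m * p + q + 1) : ℕ) : ℝ) * w := h
      _ ≤ (p : ℝ) * w := mul_le_mul_of_nonneg_right (Nat.cast_le.2 hc) hw0
  have hT0 : 0 ≤ ∑ m ∈ Finset.range k,
      (1 - pr P (allLe X (Set.Icc (m * p + q + 1) ((m + 1) * p)) u)) :=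
    Finset.sum_nonneg (fun m hm => (hJm m hm).1)
  have hTle : ∑ m ∈ Finset.range k,
      (1 - pr P (allLe X (Set.Icc (m * p + q + 1) ((m + 1) * p)) u)) ≤ (n:ℝ) * w := by
    calc ∑ m ∈ Finset.range k,
        (1 - pr P (allLe X (Set.Icc (m * p + q + 1) ((m + 1) * p)) u))
        ≤ (Finset.range k).card • ((p:ℝ) * w) :=
          Finset.sum_le_card_nsmul _ _ _ (fun m hm => (hJm m hm).2)
      _ = (k:ℝ) * ((p:ℝ) * w) := by rw [Finset.card_range, nsmul_eq_mul]
      _ ≤ (n:ℝ) * w := by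
          have h : ((k * p : ℕ) : ℝ) ≤ (n : ℝ) := Nat.cast_le.2 hkp_le
          push_cast at h
          nlinarith
  have hCexp : |(∏ m ∈ Finset.range k, pr P (allLe X (Set.Icc (m * p + q + 1) ((m + 1) * p)) u))
      - Real.exp (-(∑ m ∈ Finset.range k,
          (1 - pr P (allLe X (Set.Icc (m * p + q + 1) ((m + 1) * p)) u))))|
      ≤ ((p:ℝ) * w) * ((n:ℝ) * w) := by
    have h := prod_one_sub_exp (Finset.range k)
      (fun m => 1 - pr P (allLe X (Set.Icc (m * p + q + 1) ((m + 1) * p)) u))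
      ((p:ℝ) * w) hpw1 hJm
    have hPkprod : (∏ m ∈ Finset.range k,
        (1 - (1 - pr P (allLe X (Set.Icc (m * p + q + 1) ((m + 1) * p)) u))))
        = ∏ m ∈ Finset.range k, pr P (allLe X (Set.Icc (m * p + q + 1) ((m + 1) * p)) u) := by
      apply Finset.prod_congr rfl; intro m _; ring
    rw [hPkprod] at h
    calc _ ≤ ((p:ℝ)*w) * ∑ m ∈ Finset.range k,
          (1 - pr P (allLe X (Set.Icc (m * p + q + 1) ((m + 1) * p)) u)) := h
      _ ≤ ((p:ℝ) * w) * ((n:ℝ) * w) := mul_le_mul_of_nonneg_left hTle hpw0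
  -- Step D : |Tsum - Usum| ≤ k q w
  have hTU : |(∑ m ∈ Finset.range k,
      (1 - pr P (allLe X (Set.Icc (m * p + q + 1) ((m + 1) * p)) u)))
      - ∑ m ∈ Finset.range k, (1 - pr P (allLe X (Set.Icc (m * p + 1) ((m + 1) * p)) u))|
      ≤ (k:ℝ) * ((q:ℝ) * w) := by
    rw [← Finset.sum_sub_distrib]
    have hJIm : ∀ m ∈ Finset.range k,
        |(1 - pr P (allLe X (Set.Icc (m * p + q + 1) ((m + 1) * p)) u))
          - (1 - pr P (allLe X (Set.Icc (m * p + 1) ((m + 1) * p)) u))| ≤ (q:ℝ) * w := by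
      intro m _
      have hdrop := pr_drop P X hmeas hw (Set.Icc (m * p + q + 1) ((m + 1) * p))
        (Finset.Icc (m * p + 1) (m * p + q))
        (fun i hi => by simp only [Finset.mem_Icc] at hi; omega)
      have hu : Set.Icc (m * p + q + 1) ((m + 1) * p) ∪ ↑(Finset.Icc (m * p + 1) (m * p + q))
          = Set.Icc (m * p + 1) ((m + 1) * p) := by
        have hmp : (m + 1) * p = m * p + p := by ring
        ext i; simp only [Set.mem_union, Set.mem_Icc, Finset.coe_Icc, hmp]; omega
      rw [hu, Nat.card_Icc] at hdrop
      have hc : (m * p + q + 1 - (m * p + 1) : ℕ) = q := by omega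
      rw [hc] at hdrop
      have hmono : pr P (allLe X (Set.Icc (m * p + 1) ((m + 1) * p)) u)
          ≤ pr P (allLe X (Set.Icc (m * p + q + 1) ((m + 1) * p)) u) := by
        apply pr_mono
        apply allLe_anti
        intro i hi
        simp only [Set.mem_Icc] at *
        omega
      rw [abs_le]
      constructor <;> [linarith; linarith]
    calc |∑ m ∈ Finset.range k,
        ((1 - pr P (allLe X (Set.Icc (m * p + q + 1) ((m + 1) * p)) u))
          - (1 - pr P (allLe X (Set.Icc (m * p + 1) ((m + 1) * p)) u)))|
        ≤ ∑ m ∈ Finset.range k,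
          |(1 - pr P (allLe X (Set.Icc (m * p + q + 1) ((m + 1) * p)) u))
            - (1 - pr P (allLe X (Set.Icc (m * p + 1) ((m + 1) * p)) u))| :=
          Finset.abs_sum_le_sum_abs _ _
      _ ≤ (Finset.range k).card • ((q:ℝ) * w) := Finset.sum_le_card_nsmul _ _ _ hJIm
      _ = (k:ℝ) * ((q:ℝ) * w) := by rw [Finset.card_range, nsmul_eq_mul]
  -- Step E : Usum vs G'
  have hblocks : ∑ j ∈ Finset.Icc 1 (k * p),
      pr P ({ω | u < X j ω} ∩ allLe X (Set.Icc (j + 1) (j + p)) u)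
      = ∑ m ∈ Finset.range k, ∑ j ∈ Finset.Icc (m * p + 1) ((m + 1) * p),
          pr P ({ω | u < X j ω} ∩ allLe X (Set.Icc (j + 1) (j + p)) u) :=
    sum_blocks _ p k
  have hterm_le : ∀ m : ℕ,
      ∑ j ∈ Finset.Icc (m * p + 1) ((m + 1) * p),
        pr P ({ω | u < X j ω} ∩ allLe X (Set.Icc (j + 1) (j + p)) u)
      ≤ 1 - pr P (allLe X (Set.Icc (m * p + 1) ((m + 1) * p)) u) := by
    intro m
    have hmp : (m + 1) * p = m * p + p := by ring
    rw [hmp, ← S1_eq P X hmeas u (m * p) p hp1]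
    apply Finset.sum_le_sum
    intro j hj
    simp only [Finset.mem_Icc] at hj
    apply pr_mono
    apply Set.inter_subset_inter_right
    apply allLe_anti
    intro i hi
    simp only [Set.mem_Icc] at *
    omega
  have hterm_ge : ∀ m, m + 2 ≤ k →
      (1 - pr P (allLe X (Set.Icc (m * p + 1) ((m + 1) * p)) u))
        - ∑ j ∈ Finset.Icc (m * p + 1) ((m + 1) * p),
            pr P ({ω | u < X j ω} ∩ allLe X (Set.Icc (j + 1) (j + p)) u)
      ≤ ((p:ℝ) * w) ^ 2 + (q:ℝ) * w + αn := by
    intro m hm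
    have hmp : (m + 1) * p = m * p + p := by ring
    have hKn : m * p + 2 * p ≤ n := by
      have h : (m + 2) * p ≤ k * p := Nat.mul_le_mul_right p hm
      have h2 : (m + 2) * p = m * p + 2 * p := by ring
      omega
    have hcross := block_cross P X hmeas hw hw0 hq1 hqp hα0 hKn hmix
    have hS2 := S2_eq P X hmeas u (m * p) p hp1
    have hS2le : ∑ j ∈ Finset.Icc (m * p + 1) (m * p + p),
        pr P ({ω | u < X j ω} ∩ allLe X (Set.Icc (j + 1) (m * p + 2 * p)) u)
        ≤ ∑ j ∈ Finset.Icc (m * p + 1) (m * p + p),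
            pr P ({ω | u < X j ω} ∩ allLe X (Set.Icc (j + 1) (j + p)) u) := by
      apply Finset.sum_le_sum
      intro j hj
      simp only [Finset.mem_Icc] at hj
      apply pr_mono
      apply Set.inter_subset_inter_right
      apply allLe_anti
      intro i hi
      simp only [Set.mem_Icc] at *
      omega
    rw [hS2] at hS2le
    rw [hmp]
    linarith
  have hIprm : ∀ m : ℕ, 1 - pr P (allLe X (Set.Icc (m * p + 1) ((m + 1) * p)) u) ≤ (p:ℝ) * w := by
    intro m
    have h := one_sub_pr_le P X hmeas hw (a := m * p + 1) (b := (m + 1) * p) (by omega)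
    have hc : ((m + 1) * p + 1 - (m * p + 1) : ℕ) = p := by
      have hmp : (m + 1) * p = m * p + p := by ring
      omega
    rw [hc] at h
    exact h
  -- fold names
  set A := pr P (allLe X (Set.Icc 1 n) u) with hsetA
  set D := pr P (allLe X (Set.Icc 1 (k * p)) u) with hsetD
  set Pk := ∏ m ∈ Finset.range k, pr P (allLe X (Set.Icc (m * p + q + 1) ((m + 1) * p)) u)
    with hsetPk
  set Tsum := ∑ m ∈ Finset.range k,
    (1 - pr P (allLe X (Set.Icc (m * p + q + 1) ((m + 1) * p)) u)) with hsetT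
  set Usum := ∑ m ∈ Finset.range k,
    (1 - pr P (allLe X (Set.Icc (m * p + 1) ((m + 1) * p)) u)) with hsetU
  set G := ∑ j ∈ Finset.Icc 1 n,
    pr P ({ω | u < X j ω} ∩ allLe X (Set.Icc (j + 1) (j + p)) u) with hsetG
  set G' := ∑ j ∈ Finset.Icc 1 (k * p),
    pr P ({ω | u < X j ω} ∩ allLe X (Set.Icc (j + 1) (j + p)) u) with hsetG'
  -- Usum - G' bounds
  have hUG'_eq : Usum - G' = ∑ m ∈ Finset.range k,
      ((1 - pr P (allLe X (Set.Icc (m * p + 1) ((m + 1) * p)) u))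
        - ∑ j ∈ Finset.Icc (m * p + 1) ((m + 1) * p),
            pr P ({ω | u < X j ω} ∩ allLe X (Set.Icc (j + 1) (j + p)) u)) := by
    rw [hsetU, hblocks, ← Finset.sum_sub_distrib]
  have hUG'_lo : 0 ≤ Usum - G' := by
    rw [hUG'_eq]
    exact Finset.sum_nonneg (fun m _ => by linarith [hterm_le m])
  have hUG'_hi : Usum - G' ≤ (k:ℝ) * (((p:ℝ) * w) ^ 2 + (q:ℝ) * w + αn) + (p:ℝ) * w := by
    rw [hUG'_eq]
    have hkK : k = (k - 1) + 1 := by omega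
    rw [hkK, Finset.sum_range_succ]
    have h1 : ∑ m ∈ Finset.range (k - 1),
        ((1 - pr P (allLe X (Set.Icc (m * p + 1) ((m + 1) * p)) u))
          - ∑ j ∈ Finset.Icc (m * p + 1) ((m + 1) * p),
              pr P ({ω | u < X j ω} ∩ allLe X (Set.Icc (j + 1) (j + p)) u))
        ≤ (Finset.range (k - 1)).card • (((p:ℝ) * w) ^ 2 + (q:ℝ) * w + αn) := by
      apply Finset.sum_le_card_nsmul
      intro m hm
      simp only [Finset.mem_range] at hm
      exact hterm_ge m (by omega)
    rw [Finset.card_range, nsmul_eq_mul] at h1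
    have h2 : (1 - pr P (allLe X (Set.Icc ((k-1) * p + 1) ((k-1+1) * p)) u))
        - ∑ j ∈ Finset.Icc ((k-1) * p + 1) ((k-1+1) * p),
            pr P ({ω | u < X j ω} ∩ allLe X (Set.Icc (j + 1) (j + p)) u)
        ≤ (p:ℝ) * w := by
      have h3 := hIprm (k - 1)
      have h4 : 0 ≤ ∑ j ∈ Finset.Icc ((k-1) * p + 1) ((k-1+1) * p),
          pr P ({ω | u < X j ω} ∩ allLe X (Set.Icc (j + 1) (j + p)) u) :=
        Finset.sum_nonneg (fun j _ => hg0 j)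
      linarith
    have h5 : ((k - 1 : ℕ):ℝ) ≤ (k:ℝ) := Nat.cast_le.2 (by omega)
    have h6 : (0:ℝ) ≤ ((p:ℝ) * w) ^ 2 + (q:ℝ) * w + αn := by positivity
    have hcast : ((k - 1 + 1 : ℕ) : ℝ) = ((k - 1 : ℕ) : ℝ) + 1 := by push_cast; ring
    rw [hcast]
    linarith
  have hUsG : |Usum - G'| ≤ (k:ℝ) * (((p:ℝ) * w) ^ 2 + (q:ℝ) * w + αn) + (p:ℝ) * w := by
    rw [abs_of_nonneg hUG'_lo]; exact hUG'_hi
  -- G vs G'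
  have hGG' : |G' - G| ≤ (p:ℝ) * w := by
    have hsplit : G = G' + ∑ j ∈ Finset.Icc (k * p + 1) n,
        pr P ({ω | u < X j ω} ∩ allLe X (Set.Icc (j + 1) (j + p)) u) := by
      rw [hsetG, hsetG']
      exact sum_tail _ hkp_le
    have htail0 : 0 ≤ ∑ j ∈ Finset.Icc (k * p + 1) n,
        pr P ({ω | u < X j ω} ∩ allLe X (Set.Icc (j + 1) (j + p)) u) :=
      Finset.sum_nonneg (fun j _ => hg0 j)
    have htailw : ∑ j ∈ Finset.Icc (k * p + 1) n,
        pr P ({ω | u < X j ω} ∩ allLe X (Set.Icc (j + 1) (j + p)) u)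
        ≤ (p:ℝ) * w := by
      calc _ ≤ (Finset.Icc (k * p + 1) n).card • w :=
            Finset.sum_le_card_nsmul _ _ _ (fun j hj => by
              simp only [Finset.mem_Icc] at hj
              exact hgw j (by omega))
        _ ≤ (p:ℝ) * w := by
            rw [Nat.card_Icc, nsmul_eq_mul]
            exact mul_le_mul_of_nonneg_right (Nat.cast_le.2 (by omega)) hw0
    rw [abs_le]
    constructor <;> linarith
  have hG0 : 0 ≤ G := Finset.sum_nonneg (fun j _ => hg0 j)
  -- exp Lipschitz
  have hlip : |Real.exp (-Tsum) - Real.exp (-G)| ≤ |Tsum - G| := by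
    calc |Real.exp (-Tsum) - Real.exp (-G)| ≤ |-Tsum - -G| :=
          exp_lip (neg_nonpos.2 hT0) (neg_nonpos.2 hG0)
      _ = |Tsum - G| := by rw [show -Tsum - -G = -(Tsum - G) by ring, abs_neg]
  have hTG : |Tsum - G| ≤ (k:ℝ) * ((q:ℝ) * w)
      + ((k:ℝ) * (((p:ℝ) * w) ^ 2 + (q:ℝ) * w + αn) + (p:ℝ) * w) + (p:ℝ) * w := by
    have := abs_sub_le Tsum Usum G
    have := abs_sub_le Usum G' G
    linarith [abs_sub_le Tsum Usum G, abs_sub_le Usum G' G, hTU, hUsG, hGG']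
  have hchain : |A - Real.exp (-G)| ≤ |A - D| + |D - Pk| + |Pk - Real.exp (-Tsum)|
      + |Real.exp (-Tsum) - Real.exp (-G)| := by
    linarith [abs_sub_le A D (Real.exp (-G)), abs_sub_le D Pk (Real.exp (-G)),
      abs_sub_le Pk (Real.exp (-Tsum)) (Real.exp (-G))]
  have hk0 : (0:ℝ) ≤ (k:ℝ) := Nat.cast_nonneg k
  calc |A - Real.exp (-G)| ≤ |A - D| + |D - Pk| + |Pk - Real.exp (-Tsum)|
      + |Real.exp (-Tsum) - Real.exp (-G)| := hchain
    _ ≤ (p:ℝ) * w + (k:ℝ) * (αn + (q:ℝ) * w) + ((p:ℝ) * w) * ((n:ℝ) * w)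
        + ((k:ℝ) * ((q:ℝ) * w) + ((k:ℝ) * (((p:ℝ) * w) ^ 2 + (q:ℝ) * w + αn) + (p:ℝ) * w)
          + (p:ℝ) * w) := by
        have h := hlip.trans hTG
        linarith [hAD, hDP, hCexp, h]
    _ = (k:ℝ) * (2 * αn) + 3 * (k:ℝ) * (q:ℝ) * w + 3 * (p:ℝ) * w
        + ((p:ℝ) * w) * ((n:ℝ) * w) + (k:ℝ) * ((p:ℝ) * w) ^ 2 := by ring
end Main


/-- Corollary EasyCor: under the assumptions of Lemma lemOB (with
`F̄(xₙ) > 0` for all `n`), writing `γₙ = (1/n) ∑_{j=1}^n P(M_{j,j+pₙ} ≤ xₙ | X_j > xₙ)`,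
the sequence `P(Mₙ ≤ xₙ)` converges iff `lim γₙ` exists, in which case the limit
`γ` lies in `[0,1]` and `P(Mₙ ≤ xₙ) → e^{−τγ}`. -/
theorem stmt4 {Ω : Type*} [MeasurableSpace Ω] (P : Measure Ω) [IsProbabilityMeasure P]
    (X : ℕ → Ω → ℝ) (F : ℝ → ℝ) (xs : ℕ → ℝ) (q : ℕ → ℕ) (α : ℕ → ℝ) (p : ℕ → ℕ)
    (τ : ℝ) (hτ : 0 < τ)
    (hmeas : ∀ i, Measurable (X i))
    (hF : ∀ i, 1 ≤ i → ∀ t : ℝ, pr P {ω | X i ω ≤ t} = F t)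
    (hFbarpos : ∀ n, 0 < 1 - F (xs n))
    (hqpos : ∀ m, 1 ≤ q m)
    (hq : (fun n : ℕ => (q n : ℝ)) =o[atTop] (fun n : ℕ => (n : ℝ)))
    (hα : Tendsto α atTop (nhds 0))
    (hbd : AIMBound P X xs q α)
    (hFbar : Tendsto (fun n : ℕ => (n : ℝ) * (1 - F (xs n))) atTop (nhds τ))
    (hppos : ∀ m, 1 ≤ p m)
    (hp : (fun n : ℕ => (p n : ℝ)) =o[atTop] (fun n : ℕ => (n : ℝ)))
    (hnα : (fun n : ℕ => (n : ℝ) * α n) =o[atTop] (fun n : ℕ => (p n : ℝ)))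
    (hqp : (fun n : ℕ => (q n : ℝ)) =o[atTop] (fun n : ℕ => (p n : ℝ)))
    (γseq : ℕ → ℝ)
    (hγ : ∀ n : ℕ, γseq n = (n : ℝ)⁻¹ * ∑ j ∈ Finset.Icc 1 n,
      pr P ({ω | xs n < X j ω} ∩ allLe X (Set.Icc (j + 1) (j + p n)) (xs n)) /
        pr P {ω | xs n < X j ω}) :
    ((∃ L : ℝ, Tendsto (fun n => pr P (allLe X (Set.Icc 1 n) (xs n))) atTop (nhds L)) ↔
      (∃ γ : ℝ, Tendsto γseq atTop (nhds γ))) ∧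
    (∀ γ : ℝ, Tendsto γseq atTop (nhds γ) →
      γ ∈ Set.Icc (0 : ℝ) 1 ∧
      Tendsto (fun n => pr P (allLe X (Set.Icc 1 n) (xs n))) atTop
        (nhds (Real.exp (-(τ * γ))))) := by
  have hwn : ∀ n i, 1 ≤ i → pr P {ω | xs n < X i ω} = 1 - F (xs n) := by
    intro n i hi
    rw [pr_gt P X hmeas (xs n) i, hF i hi (xs n)]
  have hw0 : ∀ n, 0 < 1 - F (xs n) := hFbarpos
  -- γseq basic facts
  have hγeq : ∀ n : ℕ, 1 ≤ n → γseq n =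
      (∑ j ∈ Finset.Icc 1 n,
        pr P ({ω | xs n < X j ω} ∩ allLe X (Set.Icc (j + 1) (j + p n)) (xs n)))
      / ((n : ℝ) * (1 - F (xs n))) := by
    intro n hn
    rw [hγ n]
    have hcongr : ∑ j ∈ Finset.Icc 1 n,
        pr P ({ω | xs n < X j ω} ∩ allLe X (Set.Icc (j + 1) (j + p n)) (xs n)) /
          pr P {ω | xs n < X j ω}
        = ∑ j ∈ Finset.Icc 1 n,
          pr P ({ω | xs n < X j ω} ∩ allLe X (Set.Icc (j + 1) (j + p n)) (xs n)) /
            (1 - F (xs n)) := by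
      apply Finset.sum_congr rfl
      intro j hj
      simp only [Finset.mem_Icc] at hj
      rw [hwn n j hj.1]
    rw [hcongr, ← Finset.sum_div]
    have hn0 : (n:ℝ) ≠ 0 := Nat.cast_ne_zero.2 (by omega)
    have hw0' : (1 - F (xs n)) ≠ 0 := ne_of_gt (hw0 n)
    field_simp
  have hGle : ∀ n : ℕ, 1 ≤ n →
      0 ≤ (∑ j ∈ Finset.Icc 1 n,
        pr P ({ω | xs n < X j ω} ∩ allLe X (Set.Icc (j + 1) (j + p n)) (xs n))) ∧
      (∑ j ∈ Finset.Icc 1 n,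
        pr P ({ω | xs n < X j ω} ∩ allLe X (Set.Icc (j + 1) (j + p n)) (xs n)))
        ≤ (n : ℝ) * (1 - F (xs n)) := by
    intro n hn
    constructor
    · exact Finset.sum_nonneg (fun j _ => pr_nonneg P _)
    · calc (∑ j ∈ Finset.Icc 1 n,
          pr P ({ω | xs n < X j ω} ∩ allLe X (Set.Icc (j + 1) (j + p n)) (xs n)))
          ≤ (Finset.Icc 1 n).card • (1 - F (xs n)) := by
            apply Finset.sum_le_card_nsmul
            intro j hj
            simp only [Finset.mem_Icc] at hj
            rw [← hwn n j hj.1]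
            exact pr_mono P Set.inter_subset_left
        _ = (n : ℝ) * (1 - F (xs n)) := by rw [Nat.card_Icc, nsmul_eq_mul]; norm_num
  have hγ01 : ∀ n : ℕ, 1 ≤ n → 0 ≤ γseq n ∧ γseq n ≤ 1 := by
    intro n hn
    have h := hGle n hn
    have hpos : 0 < (n : ℝ) * (1 - F (xs n)) := by
      apply mul_pos _ (hw0 n)
      exact_mod_cast Nat.pos_of_ne_zero (by omega)
    rw [hγeq n hn]
    constructor
    · exact div_nonneg h.1 hpos.le
    · rw [div_le_one hpos]; exact h.2
  have hGγ : ∀ n : ℕ, 1 ≤ n →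
      (∑ j ∈ Finset.Icc 1 n,
        pr P ({ω | xs n < X j ω} ∩ allLe X (Set.Icc (j + 1) (j + p n)) (xs n)))
      = ((n : ℝ) * (1 - F (xs n))) * γseq n := by
    intro n hn
    have hpos : 0 < (n : ℝ) * (1 - F (xs n)) := by
      apply mul_pos _ (hw0 n)
      exact_mod_cast Nat.pos_of_ne_zero (by omega)
    rw [hγeq n hn]
    field_simp
    rw [mul_div_assoc, div_self (ne_of_gt (hw0 n)), mul_one]
  -- eventual structural conditions
  have hqpn : ∀ᶠ n in atTop, 3 * q n ≤ p n := by
    have h := hqp.def (by norm_num : (0:ℝ) < 1/3)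
    filter_upwards [h] with n hn
    rw [Real.norm_eq_abs, Real.norm_eq_abs, abs_of_nonneg (Nat.cast_nonneg _),
      abs_of_nonneg (Nat.cast_nonneg _)] at hn
    have : (3:ℝ) * q n ≤ p n := by linarith
    exact_mod_cast this
  have hpnn : ∀ᶠ n in atTop, p n ≤ n := by
    have h := hp.def (by norm_num : (0:ℝ) < 1)
    filter_upwards [h] with n hn
    rw [Real.norm_eq_abs, Real.norm_eq_abs, abs_of_nonneg (Nat.cast_nonneg _),
      abs_of_nonneg (Nat.cast_nonneg _), one_mul] at hn
    exact_mod_cast hn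
  have hpwt : Tendsto (fun n => (p n : ℝ) * (1 - F (xs n))) atTop (nhds 0) := by
    have h := (hp.tendsto_div_nhds_zero).mul hFbar
    rw [zero_mul] at h
    apply h.congr'
    filter_upwards [eventually_ge_atTop 1] with n hn
    have hn0 : (n:ℝ) ≠ 0 := Nat.cast_ne_zero.2 (by omega)
    field_simp
  have hpw1 : ∀ᶠ n in atTop, (p n : ℝ) * (1 - F (xs n)) ≤ 1 := by
    have := hpwt.eventually (eventually_le_nhds zero_lt_one)
    exact this
  have hα0 : ∀ᶠ n in atTop, 0 ≤ α n := by
    filter_upwards [hqpn, hpnn] with n h3q hpn2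
    have hq1 := hqpos n
    have hcond := hbd n 1 (q n) (3 * q n) le_rfl (hqpos n) (by omega) (by omega) (by omega)
      (by omega)
    exact le_trans (abs_nonneg _) hcond
  have hkle : ∀ n : ℕ, ((n / p n : ℕ) : ℝ) ≤ (n : ℝ) / (p n : ℝ) := fun n => Nat.cast_div_le
  -- error bound sequence and its convergence
  have hEt : Tendsto (fun n : ℕ =>
      ((n / p n : ℕ) : ℝ) * (2 * α n) + 3 * ((n / p n : ℕ) : ℝ) * (q n) * (1 - F (xs n))
        + 3 * (p n) * (1 - F (xs n))
        + ((p n : ℝ) * (1 - F (xs n))) * ((n : ℝ) * (1 - F (xs n)))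
        + ((n / p n : ℕ) : ℝ) * ((p n : ℝ) * (1 - F (xs n))) ^ 2
        + |(n : ℝ) * (1 - F (xs n)) - τ|) atTop (nhds 0) := by
    have gt1 : Tendsto (fun n : ℕ => 2 * |(n:ℝ) * α n / (p n:ℝ)|) atTop (nhds 0) := by
      have h := (hnα.tendsto_div_nhds_zero).abs
      rw [abs_zero] at h
      simpa using h.const_mul 2
    have gt2 : Tendsto (fun n : ℕ => 3 * (((q n:ℝ) / (p n:ℝ)) * ((n:ℝ) * (1 - F (xs n)))))
        atTop (nhds 0) := by
      have h := (hqp.tendsto_div_nhds_zero).mul hFbar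
      rw [zero_mul] at h
      simpa using h.const_mul 3
    have gt3 : Tendsto (fun n : ℕ => 3 * ((p n:ℝ) * (1 - F (xs n)))) atTop (nhds 0) := by
      simpa using hpwt.const_mul 3
    have gt4 : Tendsto (fun n : ℕ => ((p n:ℝ) * (1 - F (xs n))) * ((n:ℝ) * (1 - F (xs n))))
        atTop (nhds 0) := by
      have h := hpwt.mul hFbar
      rwa [zero_mul] at h
    have gt5 : Tendsto (fun n : ℕ => ((n:ℝ) * (1 - F (xs n))) * ((p n:ℝ) * (1 - F (xs n))))
        atTop (nhds 0) := by
      have h := hFbar.mul hpwt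
      rwa [mul_zero] at h
    have gt6 : Tendsto (fun n : ℕ => |(n:ℝ) * (1 - F (xs n)) - τ|) atTop (nhds 0) := by
      have h := (hFbar.sub (tendsto_const_nhds : Tendsto (fun _ : ℕ => τ) atTop (nhds τ))).abs
      simpa using h
    apply squeeze_zero_norm' (a := fun n : ℕ =>
      2 * |(n:ℝ) * α n / (p n:ℝ)| + 3 * (((q n:ℝ) / (p n:ℝ)) * ((n:ℝ) * (1 - F (xs n))))
        + 3 * ((p n:ℝ) * (1 - F (xs n)))
        + ((p n:ℝ) * (1 - F (xs n))) * ((n:ℝ) * (1 - F (xs n)))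
        + ((n:ℝ) * (1 - F (xs n))) * ((p n:ℝ) * (1 - F (xs n)))
        + |(n:ℝ) * (1 - F (xs n)) - τ|)
    · filter_upwards [hα0, eventually_ge_atTop 1] with n hα0n hn1
      have hp1 : 1 ≤ p n := hppos n
      have hp0 : (0:ℝ) < (p n : ℝ) := by exact_mod_cast hp1
      have hwn0 : (0:ℝ) < 1 - F (xs n) := hw0 n
      have hk := hkle n
      have hk0 : (0:ℝ) ≤ ((n / p n : ℕ) : ℝ) := Nat.cast_nonneg _
      have hn0 : (0:ℝ) ≤ (n:ℝ) := Nat.cast_nonneg _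
      have hq0 : (0:ℝ) ≤ (q n:ℝ) := Nat.cast_nonneg _
      have hT1 : ((n / p n : ℕ) : ℝ) * (2 * α n) ≤ 2 * |(n:ℝ) * α n / (p n:ℝ)| := by
        have h1 : ((n / p n : ℕ) : ℝ) * (2 * α n) ≤ ((n:ℝ) / (p n:ℝ)) * (2 * α n) :=
          mul_le_mul_of_nonneg_right hk (by linarith)
        have h2 : ((n:ℝ) / (p n:ℝ)) * (2 * α n) = 2 * ((n:ℝ) * α n / (p n:ℝ)) := by ring
        have h3 : (n:ℝ) * α n / (p n:ℝ) ≤ |(n:ℝ) * α n / (p n:ℝ)| := le_abs_self _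
        linarith
      have hT2 : 3 * ((n / p n : ℕ) : ℝ) * (q n) * (1 - F (xs n))
          ≤ 3 * (((q n:ℝ) / (p n:ℝ)) * ((n:ℝ) * (1 - F (xs n)))) := by
        have h1 : ((n / p n : ℕ) : ℝ) * ((q n:ℝ) * (1 - F (xs n)))
            ≤ ((n:ℝ) / (p n:ℝ)) * ((q n:ℝ) * (1 - F (xs n))) :=
          mul_le_mul_of_nonneg_right hk (by positivity)
        have h2 : ((n:ℝ) / (p n:ℝ)) * ((q n:ℝ) * (1 - F (xs n)))
            = ((q n:ℝ) / (p n:ℝ)) * ((n:ℝ) * (1 - F (xs n))) := by ring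
        nlinarith
      have hT5 : ((n / p n : ℕ) : ℝ) * ((p n : ℝ) * (1 - F (xs n))) ^ 2
          ≤ ((n:ℝ) * (1 - F (xs n))) * ((p n:ℝ) * (1 - F (xs n))) := by
        have h1 : ((n / p n : ℕ) : ℝ) * ((p n : ℝ) * (1 - F (xs n))) ^ 2
            ≤ ((n:ℝ) / (p n:ℝ)) * ((p n : ℝ) * (1 - F (xs n))) ^ 2 :=
          mul_le_mul_of_nonneg_right hk (by positivity)
        have h2 : ((n:ℝ) / (p n:ℝ)) * ((p n : ℝ) * (1 - F (xs n))) ^ 2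
            = ((n:ℝ) * (1 - F (xs n))) * ((p n:ℝ) * (1 - F (xs n))) := by
          field_simp
        linarith
      have hEnn : (0:ℝ) ≤ ((n / p n : ℕ) : ℝ) * (2 * α n) + 3 * ((n / p n : ℕ) : ℝ) * (q n) * (1 - F (xs n))
          + 3 * (p n) * (1 - F (xs n))
          + ((p n : ℝ) * (1 - F (xs n))) * ((n : ℝ) * (1 - F (xs n)))
          + ((n / p n : ℕ) : ℝ) * ((p n : ℝ) * (1 - F (xs n))) ^ 2
          + |(n : ℝ) * (1 - F (xs n)) - τ| := by positivity
      rw [Real.norm_eq_abs, abs_of_nonneg hEnn]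
      have htriv : (3:ℝ) * (p n) * (1 - F (xs n)) = 3 * ((p n:ℝ) * (1 - F (xs n))) := by ring
      linarith
    · have := ((((gt1.add gt2).add gt3).add gt4).add gt5).add gt6
      simpa using this
  -- the key convergence
  have key : Tendsto (fun n => pr P (allLe X (Set.Icc 1 n) (xs n))
      - Real.exp (-(τ * γseq n))) atTop (nhds 0) := by
    apply squeeze_zero_norm' ?_ hEt
    filter_upwards [hqpn, hpnn, hpw1, hα0, eventually_ge_atTop 1] with n h3q hpn2 hpw1n hα0n hn1
    have hq1 := hqpos n
    have hmixn := fun a b c h1 h2 h3 h4 h5 h6 => hbd n a b c h1 h2 h3 h4 h5 h6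
    have hmain := main_est P X hmeas (hwn n) (hw0 n).le hq1 h3q hα0n hpn2 hpw1n hmixn
    have hG0 := (hGle n hn1).1
    have hγn := hγ01 n hn1
    have hτγ0 : 0 ≤ τ * γseq n := mul_nonneg hτ.le hγn.1
    have hlip2 : |Real.exp (-(∑ j ∈ Finset.Icc 1 n,
        pr P ({ω | xs n < X j ω} ∩ allLe X (Set.Icc (j + 1) (j + p n)) (xs n))))
        - Real.exp (-(τ * γseq n))|
        ≤ |(∑ j ∈ Finset.Icc 1 n,
            pr P ({ω | xs n < X j ω} ∩ allLe X (Set.Icc (j + 1) (j + p n)) (xs n)))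
          - τ * γseq n| := by
      calc _ ≤ |-(∑ j ∈ Finset.Icc 1 n,
            pr P ({ω | xs n < X j ω} ∩ allLe X (Set.Icc (j + 1) (j + p n)) (xs n)))
          - -(τ * γseq n)| := exp_lip (neg_nonpos.2 hG0) (neg_nonpos.2 hτγ0)
        _ = _ := by rw [show -(∑ j ∈ Finset.Icc 1 n,
            pr P ({ω | xs n < X j ω} ∩ allLe X (Set.Icc (j + 1) (j + p n)) (xs n)))
          - -(τ * γseq n) = -((∑ j ∈ Finset.Icc 1 n,
            pr P ({ω | xs n < X j ω} ∩ allLe X (Set.Icc (j + 1) (j + p n)) (xs n)))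
          - τ * γseq n) by ring, abs_neg]
    have hdiff : |(∑ j ∈ Finset.Icc 1 n,
        pr P ({ω | xs n < X j ω} ∩ allLe X (Set.Icc (j + 1) (j + p n)) (xs n)))
        - τ * γseq n| ≤ |(n:ℝ) * (1 - F (xs n)) - τ| := by
      rw [hGγ n hn1, show ((n:ℝ) * (1 - F (xs n))) * γseq n - τ * γseq n
        = ((n:ℝ) * (1 - F (xs n)) - τ) * γseq n by ring, abs_mul]
      calc |(n:ℝ) * (1 - F (xs n)) - τ| * |γseq n|
          ≤ |(n:ℝ) * (1 - F (xs n)) - τ| * 1 := by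
            apply mul_le_mul_of_nonneg_left _ (abs_nonneg _)
            rw [abs_of_nonneg hγn.1]
            exact hγn.2
        _ = |(n:ℝ) * (1 - F (xs n)) - τ| := by ring
    rw [Real.norm_eq_abs]
    calc |pr P (allLe X (Set.Icc 1 n) (xs n)) - Real.exp (-(τ * γseq n))|
        ≤ |pr P (allLe X (Set.Icc 1 n) (xs n)) - Real.exp (-(∑ j ∈ Finset.Icc 1 n,
            pr P ({ω | xs n < X j ω} ∩ allLe X (Set.Icc (j + 1) (j + p n)) (xs n))))|
          + |Real.exp (-(∑ j ∈ Finset.Icc 1 n,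
            pr P ({ω | xs n < X j ω} ∩ allLe X (Set.Icc (j + 1) (j + p n)) (xs n))))
            - Real.exp (-(τ * γseq n))| := abs_sub_le _ _ _
      _ ≤ _ := by
          have h2 := hlip2.trans hdiff
          linarith [hmain]
  -- continuity wrap-up
  have hcont : ∀ γ : ℝ, Tendsto γseq atTop (nhds γ) →
      Tendsto (fun n => pr P (allLe X (Set.Icc 1 n) (xs n))) atTop
        (nhds (Real.exp (-(τ * γ)))) := by
    intro γ hγl
    have h1 : Tendsto (fun n => Real.exp (-(τ * γseq n))) atTop
        (nhds (Real.exp (-(τ * γ)))) :=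
      (Real.continuous_exp.tendsto _).comp ((hγl.const_mul τ).neg)
    have h2 := key.add h1
    rw [zero_add] at h2
    exact Tendsto.congr (fun n => by ring) h2
  refine ⟨⟨?_, ?_⟩, ?_⟩
  · rintro ⟨L, hL⟩
    have hE2 : Tendsto (fun n => Real.exp (-(τ * γseq n))) atTop (nhds L) := by
      have h := hL.sub key
      rw [sub_zero] at h
      exact Tendsto.congr (fun n => by ring) h
    have hLpos : 0 < L := by
      have hlb : ∀ᶠ n in atTop, Real.exp (-τ) ≤ Real.exp (-(τ * γseq n)) := by
        filter_upwards [eventually_ge_atTop 1] with n hn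
        apply Real.exp_le_exp.2
        nlinarith [(hγ01 n hn).1, (hγ01 n hn).2]
      have := ge_of_tendsto hE2 hlb
      linarith [Real.exp_pos (-τ)]
    have hτ0 : τ ≠ 0 := ne_of_gt hτ
    have hlog : Tendsto (fun n => Real.log (Real.exp (-(τ * γseq n)))) atTop
        (nhds (Real.log L)) :=
      ((Real.continuousAt_log (ne_of_gt hLpos)).tendsto).comp hE2
    have heq : (fun n => Real.log (Real.exp (-(τ * γseq n)))) = fun n => -(τ * γseq n) :=
      funext fun n => Real.log_exp _
    rw [heq] at hlog
    refine ⟨Real.log L / (-τ), ?_⟩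
    have h := hlog.div_const (-τ)
    apply Tendsto.congr _ h
    intro n
    field_simp
  · rintro ⟨γ, hγl⟩
    exact ⟨_, hcont γ hγl⟩
  · intro γ hγl
    refine ⟨⟨?_, ?_⟩, hcont γ hγl⟩
    · apply ge_of_tendsto hγl
      filter_upwards [eventually_ge_atTop 1] with n hn
      exact (hγ01 n hn).1
    · apply le_of_tendsto hγl
      filter_upwards [eventually_ge_atTop 1] with n hn
      exact (hγ01 n hn).2
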